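/- Fix integers r ≥ 1, M ≥ 0 with 2^M > r. Let W be the half-lazy dyadic walk operator on ℤ/rℤ, p₀ = δ₀, and pₙ = Wⁿp₀. Then for all n ≥ 0, |pₙ(0) − 1/r| ≤ (1 − 1/(2(M+1)))ⁿ. -/

import Mathlib

open Finset

/-- The dyadic walk operator on `ℤ/rℤ`. -/
noncomputable def dyadicP (r M : ℕ) (f : ZMod r → ℝ) : ZMod r → ℝ :=
  fun j => (1 / (2 * ((M : ℝ) + 1))) *
    ∑ t ∈ Finset.range (M + 1), (f (j + 2 ^ t) + f (j - 2 ^ t))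

/-- The half-lazy dyadic walk operator `W = (I+P)/2` on `ℤ/rℤ`. -/
noncomputable def dyadicW (r M : ℕ) (f : ZMod r → ℝ) : ZMod r → ℝ :=
  fun j => (f j + dyadicP r M f j) / 2

/-! ### Auxiliary development -/

noncomputable def cc (r : ℕ) (c : ℤ) : ℝ := Real.cos (2 * Real.pi * c / r)

noncomputable def chiF (r k : ℕ) (j : ZMod r) : ℝ := cc r (k * j.val)

noncomputable def lamW (r M k : ℕ) : ℝ :=
  1/2 + (1/(2*((M:ℝ)+1))) * ∑ t ∈ Finset.range (M+1), cc r (k * 2^t)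

lemma cc_congr {r : ℕ} (hr : 0 < r) {a b : ℤ} (h : (a : ZMod r) = (b : ZMod r)) :
    cc r a = cc r b := by
  have hd : (r:ℤ) ∣ b - a := ((ZMod.intCast_eq_intCast_iff a b r).mp h).dvd
  obtain ⟨m, hm⟩ := hd
  have hbz : b = a + r * m := by omega
  have hb : (b:ℝ) = (a:ℝ) + (r:ℝ) * (m:ℝ) := by exact_mod_cast hbz
  have hr' : (r:ℝ) ≠ 0 := Nat.cast_ne_zero.mpr hr.ne'
  have key : 2 * Real.pi * ((a:ℝ) + (r:ℝ) * (m:ℝ)) / r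
      = 2 * Real.pi * (a:ℝ) / r + (m:ℝ) * (2*Real.pi) := by
    field_simp
  unfold cc
  rw [hb, key]
  exact (Real.cos_add_int_mul_two_pi _ m).symm

lemma cc_pair {r : ℕ} (x s : ℤ) :
    cc r (x + s) + cc r (x - s) = 2 * cc r s * cc r x := by
  unfold cc
  push_cast
  rw [show 2 * Real.pi * ((x:ℝ) + s) / r = 2*Real.pi*x/r + 2*Real.pi*s/r by ring,
      show 2 * Real.pi * ((x:ℝ) - s) / r = 2*Real.pi*x/r - 2*Real.pi*s/r by ring,
      Real.cos_add, Real.cos_sub]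
  ring

lemma chiF_shift {r : ℕ} [NeZero r] (k : ℕ) (j : ZMod r) (s : ℤ) :
    chiF r k (j + (s : ZMod r)) = cc r (k * ((j.val : ℤ) + s)) := by
  have hr : 0 < r := Nat.pos_of_ne_zero (NeZero.ne r)
  apply cc_congr hr
  push_cast [ZMod.natCast_val, ZMod.cast_id, ZMod.intCast_cast]
  ring

lemma chiF_pair {r : ℕ} [NeZero r] (k : ℕ) (j : ZMod r) (t : ℕ) :
    chiF r k (j + 2^t) + chiF r k (j - 2^t) = 2 * cc r (k * 2^t) * chiF r k j := by
  have h1 : ((2:ZMod r)^t) = (((2^t : ℤ)) : ZMod r) := by push_cast; ring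
  have h2 : j - 2^t = j + (((-(2^t) : ℤ)) : ZMod r) := by push_cast; ring
  rw [show j + (2:ZMod r)^t = j + (((2^t : ℤ)) : ZMod r) by rw [h1], h2,
      chiF_shift, chiF_shift]
  rw [show (k:ℤ) * ((j.val:ℤ) + 2^t) = k * j.val + k * 2^t by ring,
      show (k:ℤ) * ((j.val:ℤ) + -2^t) = k * j.val - k * 2^t by ring]
  rw [cc_pair]
  rfl

lemma W_chi {r M : ℕ} [NeZero r] (k : ℕ) (j : ZMod r) :
    dyadicW r M (chiF r k) j = lamW r M k * chiF r k j := by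
  have hP : dyadicP r M (chiF r k) j
      = (1 / (2 * ((M : ℝ) + 1))) *
        ((2 * ∑ t ∈ Finset.range (M+1), cc r (k * 2^t)) * chiF r k j) := by
    unfold dyadicP
    congr 1
    rw [Finset.sum_congr rfl (fun t _ => chiF_pair k j t)]
    rw [← Finset.sum_mul, ← Finset.mul_sum]
  unfold dyadicW lamW
  rw [hP]
  ring

lemma W_sum {r M : ℕ} (s : Finset ℕ) (g : ℕ → ZMod r → ℝ) (j : ZMod r) :
    dyadicW r M (fun x => ∑ k ∈ s, g k x) j = ∑ k ∈ s, dyadicW r M (g k) j := by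
  unfold dyadicW dyadicP
  have key : ∑ t ∈ Finset.range (M+1), (∑ k ∈ s, g k (j + 2^t) + ∑ k ∈ s, g k (j - 2^t))
      = ∑ k ∈ s, ∑ t ∈ Finset.range (M+1), (g k (j + 2^t) + g k (j - 2^t)) := by
    rw [Finset.sum_comm]
    exact Finset.sum_congr rfl fun t _ => (Finset.sum_add_distrib).symm
  beta_reduce
  rw [key, Finset.mul_sum, ← Finset.sum_add_distrib, Finset.sum_div]

lemma W_smul {r M : ℕ} (a : ℝ) (f : ZMod r → ℝ) (j : ZMod r) :
    dyadicW r M (fun x => a * f x) j = a * dyadicW r M f j := by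
  unfold dyadicW dyadicP
  have h : (∑ t ∈ Finset.range (M+1), (a * f (j + 2^t) + a * f (j - 2^t)))
      = a * ∑ t ∈ Finset.range (M+1), (f (j + 2^t) + f (j - 2^t)) := by
    rw [Finset.mul_sum]
    exact Finset.sum_congr rfl fun t _ => by ring
  rw [h]
  ring

lemma ortho {r : ℕ} [NeZero r] (j : ZMod r) :
    ∑ k ∈ Finset.range r, chiF r k j = if j = 0 then (r:ℝ) else 0 := by
  have hr : 0 < r := Nat.pos_of_ne_zero (NeZero.ne r)
  have hrR : (r:ℝ) ≠ 0 := Nat.cast_ne_zero.mpr hr.ne'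
  by_cases hj : j = 0
  · subst hj
    simp [chiF, cc, ZMod.val_zero]
  · set v : ℕ := j.val with hv
    have hv0 : v ≠ 0 := fun h => hj ((ZMod.val_eq_zero j).mp h)
    have hvr : v < r := ZMod.val_lt j
    set θ : ℝ := 2 * Real.pi * v / r with hθ
    set z : ℂ := Complex.exp (θ * Complex.I) with hz
    have hterm : ∀ k : ℕ, chiF r k j = (z ^ k).re := by
      intro k
      rw [hz, ← Complex.exp_nat_mul]
      have : (k:ℂ) * (θ * Complex.I) = ((k * θ : ℝ) : ℂ) * Complex.I := by push_cast; ring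
      rw [this, Complex.exp_ofReal_mul_I_re]
      have : (k:ℝ) * θ = 2 * Real.pi * ((k:ℤ) * (v:ℤ)) / r := by
        rw [hθ]; push_cast; ring
      rw [this]
      unfold chiF cc
      push_cast
      ring_nf
      rw [← hv]
      ring_nf
    have hz1 : z ≠ 1 := by
      intro h
      obtain ⟨m, hm⟩ := Complex.exp_eq_one_iff.mp (hz ▸ h)
      have hm' : ((θ:ℂ)) * Complex.I = ((m:ℂ) * (2*Real.pi)) * Complex.I := by rw [hm]; ring
      have hI : (θ:ℂ) = (m:ℂ) * (2 * Real.pi) := mul_right_cancel₀ Complex.I_ne_zero hm'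
      have hreal : θ = (m:ℝ) * (2 * Real.pi) := by exact_mod_cast hI
      have hpi := Real.pi_pos
      have : (v:ℝ) = m * r := by
        rw [hθ] at hreal
        field_simp at hreal
        nlinarith [hreal]
      have : (v:ℤ) = m * r := by exact_mod_cast this
      have h1 : (0:ℤ) < v := by exact_mod_cast Nat.pos_of_ne_zero hv0
      have h2 : (v:ℤ) < r := by exact_mod_cast hvr
      have h3 : (0:ℤ) < r := by exact_mod_cast hr
      rcases le_or_gt m 0 with hm0 | hm0
      · nlinarith
      · nlinarith
    have hzr : z ^ r = 1 := by
      rw [hz, ← Complex.exp_nat_mul]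
      have : (r:ℂ) * (θ * Complex.I) = (v:ℤ) * (2 * Real.pi * Complex.I) := by
        have hrC : (r:ℂ) ≠ 0 := Nat.cast_ne_zero.mpr hr.ne'
        rw [hθ]; push_cast; field_simp
      rw [this, Complex.exp_int_mul_two_pi_mul_I]
    have hsum : ∑ k ∈ Finset.range r, z ^ k = 0 := by
      rw [geom_sum_eq hz1, hzr]
      simp
    rw [if_neg hj]
    calc ∑ k ∈ Finset.range r, chiF r k j = ∑ k ∈ Finset.range r, (z ^ k).re :=
          Finset.sum_congr rfl fun k _ => hterm k
      _ = (∑ k ∈ Finset.range r, z ^ k).re := by rw [Complex.re_sum]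
      _ = 0 := by rw [hsum]; rfl

lemma iter_formula {r M : ℕ} [NeZero r] (n : ℕ) :
    (dyadicW r M)^[n] (fun j => if j = 0 then (1 : ℝ) else 0)
      = fun j => ∑ k ∈ Finset.range r, ((1/(r:ℝ)) * (lamW r M k)^n) * chiF r k j := by
  have hr : 0 < r := Nat.pos_of_ne_zero (NeZero.ne r)
  have hrR : (r:ℝ) ≠ 0 := Nat.cast_ne_zero.mpr hr.ne'
  induction n with
  | zero =>
    funext j
    simp only [Function.iterate_zero, id_eq, pow_zero, mul_one]
    rw [← Finset.mul_sum, ortho j]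
    by_cases hj : j = 0 <;> simp [hj, hrR]
  | succ n ih =>
    rw [Function.iterate_succ_apply', ih]
    funext j
    rw [show (fun x => ∑ k ∈ Finset.range r, ((1/(r:ℝ)) * (lamW r M k)^n) * chiF r k x)
        = (fun x => ∑ k ∈ Finset.range r,
            (fun k x => ((1/(r:ℝ)) * (lamW r M k)^n) * chiF r k x) k x) from rfl,
      W_sum]
    refine Finset.sum_congr rfl fun k _ => ?_
    rw [W_smul, W_chi]
    ring

/-! ### The combinatorial doubling argument -/

lemma two_mul_mod (a r : ℕ) : (2*a) % r = (2*(a%r)) % r := by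
  conv_lhs => rw [← Nat.mod_add_div a r]
  rw [show 2*(a%r + r*(a/r)) = 2*(a%r) + r*(2*(a/r)) by ring, Nat.add_mul_mod_self_left]

lemma double_step (m r : ℕ) (hm : m < r) (h : 4 * min m (r - m) < r) :
    min ((2*m) % r) (r - (2*m) % r) = 2 * min m (r - m) := by
  rcases lt_or_ge (2*m) r with h2 | h2
  · rw [Nat.mod_eq_of_lt h2]; omega
  · have hmod : (2*m) % r = 2*m - r := by
      rw [Nat.mod_eq_sub_mod h2]
      exact Nat.mod_eq_of_lt (by omega)
    rw [hmod]; omega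

lemma exists_big (r M k : ℕ) (hk : 1 ≤ k) (hkr : k < r) (h2M : r < 2^M) :
    ∃ t ≤ M, r ≤ 4 * ((k * 2^t) % r) ∧ 4 * ((k * 2^t) % r) ≤ 3*r := by
  have hr : 0 < r := by omega
  set m : ℕ → ℕ := fun t => (k * 2^t) % r with hm
  have hmlt : ∀ t, m t < r := fun t => Nat.mod_lt _ hr
  suffices h : ∃ t ≤ M, r ≤ 4 * min (m t) (r - m t) by
    obtain ⟨t, ht, hd⟩ := h
    have he : m t = (k * 2^t) % r := rfl
    exact ⟨t, ht, by have := hmlt t; omega, by have := hmlt t; omega⟩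
  by_contra hcon
  push_neg at hcon
  have key : ∀ t ≤ M, 2^t ≤ min (m t) (r - m t) := by
    intro t ht
    induction t with
    | zero =>
      have : m 0 = k := by simp [hm, Nat.mod_eq_of_lt hkr]
      rw [this]; simp; omega
    | succ s ih =>
      have hs := ih (by omega)
      have hsmall := hcon s (by omega)
      have hrec : m (s+1) = (2 * m s) % r := by
        simp only [hm]
        rw [show k * 2^(s+1) = 2 * (k * 2^s) by ring, two_mul_mod]
      rw [hrec, double_step (m s) r (hmlt s) hsmall]
      calc 2^(s+1) = 2 * 2^s := by ring
      _ ≤ 2 * min (m s) (r - m s) := by omega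
  have := key M le_rfl
  have := hcon M le_rfl
  have := hmlt M
  omega

/-! ### Eigenvalue bounds -/

lemma cc_le_one (r : ℕ) (c : ℤ) : cc r c ≤ 1 := Real.cos_le_one _

lemma neg_one_le_cc (r : ℕ) (c : ℤ) : -1 ≤ cc r c := Real.neg_one_le_cos _

lemma lamW_zero {r M : ℕ} (hr : 0 < r) : lamW r M 0 = 1 := by
  unfold lamW
  have : ∀ t ∈ Finset.range (M+1), cc r ((0:ℕ) * 2^t) = 1 := by
    intro t _
    simp [cc]
  rw [Finset.sum_congr rfl this, Finset.sum_const, Finset.card_range]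
  have hM : ((M:ℝ)+1) ≠ 0 := by positivity
  field_simp
  ring

lemma lamW_nonneg {r M k : ℕ} : 0 ≤ lamW r M k := by
  unfold lamW
  have hM : (0:ℝ) < (M:ℝ) + 1 := by positivity
  have hS : -((M:ℝ)+1) ≤ ∑ t ∈ Finset.range (M+1), cc r (k * 2^t) := by
    have := Finset.card_nsmul_le_sum (Finset.range (M+1))
      (fun t => cc r (k * 2^t)) (-1) (fun t _ => neg_one_le_cc r _)
    simpa [Finset.card_range] using this
  have hc : (0:ℝ) < 1/(2*((M:ℝ)+1)) := by positivity
  have hmul := mul_le_mul_of_nonneg_left hS hc.le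
  have hid : 1/(2*((M:ℝ)+1)) * (-((M:ℝ)+1)) = -(1/2) := by field_simp
  linarith

lemma cos_frac_nonpos {r m : ℕ} (hr : 0 < r) (h1 : r ≤ 4*m) (h2 : 4*m ≤ 3*r) :
    Real.cos (2*Real.pi*(m:ℝ)/r) ≤ 0 := by
  have hpi := Real.pi_pos
  have hrR : (0:ℝ) < r := by exact_mod_cast hr
  have c1 : (r:ℝ) ≤ 4*m := by exact_mod_cast h1
  have c2 : (4:ℝ)*m ≤ 3*r := by exact_mod_cast h2
  apply Real.cos_nonpos_of_pi_div_two_le_of_le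
  · rw [div_le_div_iff₀ (by norm_num) hrR]
    nlinarith
  · rw [div_le_iff₀ hrR]
    nlinarith

lemma lamW_le {r M k : ℕ} (hr : 0 < r) (hk : 1 ≤ k) (hkr : k < r) (h2M : r < 2^M) :
    lamW r M k ≤ 1 - 1/(2*((M:ℝ)+1)) := by
  obtain ⟨t0, ht0, hlo, hhi⟩ := exists_big r M k hk hkr h2M
  set m0 : ℕ := (k * 2^t0) % r with hm0
  have hterm : cc r (k * 2^t0) ≤ 0 := by
    have hcongr : cc r ((k:ℤ) * 2^t0) = cc r (m0:ℤ) := by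
      apply cc_congr hr
      push_cast
      rw [show ((k:ZMod r) * 2^t0) = ((k * 2^t0 : ℕ) : ZMod r) by push_cast; ring]
      exact (ZMod.natCast_mod _ r).symm
    rw [show ((k:ℤ) * 2^t0) = (k:ℤ) * 2^t0 from rfl] at hcongr
    have : cc r ((m0:ℤ)) = Real.cos (2*Real.pi*(m0:ℝ)/r) := by
      unfold cc; norm_num
    rw [hcongr, this]
    exact cos_frac_nonpos hr hlo hhi
  have ht0mem : t0 ∈ Finset.range (M+1) := Finset.mem_range.mpr (by omega)
  have hS : ∑ t ∈ Finset.range (M+1), cc r (k * 2^t) ≤ (M:ℝ) := by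
    rw [← Finset.sum_erase_add _ _ ht0mem]
    have h1 : ∑ t ∈ (Finset.range (M+1)).erase t0, cc r (k * 2^t) ≤ (M:ℝ) := by
      have := Finset.sum_le_card_nsmul ((Finset.range (M+1)).erase t0)
        (fun t => cc r (k * 2^t)) 1 (fun t _ => cc_le_one r _)
      rw [Finset.card_erase_of_mem ht0mem, Finset.card_range] at this
      simpa using this
    linarith
  unfold lamW
  have hM : (0:ℝ) < (M:ℝ) + 1 := by positivity
  have hc : (0:ℝ) < 1/(2*((M:ℝ)+1)) := by positivity
  have hmul := mul_le_mul_of_nonneg_left hS hc.le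
  have hgoal : 1/2 + 1/(2*((M:ℝ)+1)) * (M:ℝ) = 1 - 1/(2*((M:ℝ)+1)) := by
    field_simp
    ring
  linarith

/-! ### Main theorem -/

/-- Heat-kernel convergence: for the half-lazy dyadic walk started at δ₀,
`|pₙ(0) − 1/r| ≤ (1 − 1/(2(M+1)))ⁿ` for all `n ≥ 0`, provided `2^M > r`. -/
theorem stmt_7 (r M : ℕ) (hr : 1 ≤ r) (h2M : r < 2 ^ M) (n : ℕ) :
    |((dyadicW r M)^[n] (fun j => if j = 0 then (1 : ℝ) else 0)) 0 - 1 / r|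
      ≤ (1 - 1 / (2 * ((M : ℝ) + 1))) ^ n := by
  haveI : NeZero r := ⟨by omega⟩
  have hr0 : 0 < r := hr
  have hrR : (0:ℝ) < r := by exact_mod_cast hr0
  have hM : (0:ℝ) < (M:ℝ) + 1 := by positivity
  set Λ : ℝ := 1 - 1/(2*((M:ℝ)+1)) with hΛ
  have hΛ0 : 0 ≤ Λ := by
    rw [hΛ]
    have : 1/(2*((M:ℝ)+1)) ≤ 1/2 := by
      apply div_le_div_of_nonneg_left (by norm_num) (by norm_num)
      nlinarith
    linarith
  rw [iter_formula n]
  beta_reduce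
  have hchi0 : ∀ k : ℕ, chiF r k (0 : ZMod r) = 1 := by
    intro k
    unfold chiF cc
    simp [ZMod.val_zero]
  have heval : ∑ k ∈ Finset.range r, ((1/(r:ℝ)) * (lamW r M k)^n) * chiF r k (0 : ZMod r)
      = ∑ k ∈ Finset.range r, (1/(r:ℝ)) * (lamW r M k)^n := by
    exact Finset.sum_congr rfl fun k _ => by rw [hchi0 k, mul_one]
  have h0mem : (0:ℕ) ∈ Finset.range r := Finset.mem_range.mpr hr0
  have hsplit : ∑ k ∈ Finset.range r, (1/(r:ℝ)) * (lamW r M k)^n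
      = (∑ k ∈ (Finset.range r).erase 0, (1/(r:ℝ)) * (lamW r M k)^n) + 1/r := by
    rw [← Finset.sum_erase_add _ _ h0mem, lamW_zero hr0, one_pow, mul_one]
  rw [heval, hsplit]
  rw [add_sub_cancel_right]
  have hbound : ∀ k ∈ (Finset.range r).erase 0,
      0 ≤ (1/(r:ℝ)) * (lamW r M k)^n ∧ (1/(r:ℝ)) * (lamW r M k)^n ≤ (1/(r:ℝ)) * Λ^n := by
    intro k hk
    have hk0 : k ≠ 0 := Finset.ne_of_mem_erase hk
    have hkr : k < r := Finset.mem_range.mp (Finset.mem_of_mem_erase hk)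
    have h1 : 0 ≤ lamW r M k := lamW_nonneg
    have h2 : lamW r M k ≤ Λ := lamW_le hr0 (by omega) hkr h2M
    constructor
    · positivity
    · apply mul_le_mul_of_nonneg_left _ (by positivity : (0:ℝ) ≤ 1/(r:ℝ))
      exact pow_le_pow_left₀ h1 h2 n
  have hnonneg : 0 ≤ ∑ k ∈ (Finset.range r).erase 0, (1/(r:ℝ)) * (lamW r M k)^n :=
    Finset.sum_nonneg fun k hk => (hbound k hk).1
  rw [abs_of_nonneg hnonneg]
  calc ∑ k ∈ (Finset.range r).erase 0, (1/(r:ℝ)) * (lamW r M k)^n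
      ≤ ∑ k ∈ (Finset.range r).erase 0, (1/(r:ℝ)) * Λ^n :=
        Finset.sum_le_sum fun k hk => (hbound k hk).2
    _ = ((r:ℝ) - 1) * ((1/(r:ℝ)) * Λ^n) := by
        rw [Finset.sum_const, Finset.card_erase_of_mem h0mem, Finset.card_range]
        rw [nsmul_eq_mul]
        congr 1
        have : (1:ℝ) ≤ r := by exact_mod_cast hr
        push_cast [Nat.cast_sub hr]
        ring
    _ ≤ (r:ℝ) * ((1/(r:ℝ)) * Λ^n) := by
        apply mul_le_mul_of_nonneg_right (by linarith) (by positivity)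
    _ = Λ^n := by field_simp
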